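/- Let α, β > -1 be real, L > 0, N ∈ ℕ, and let a_0, …, a_N be real coefficients. Define f : ℝ → ℝ by f(x) = x/(x²+1) + (x²/(x²+1)) · ∑_{j=0}^{N} a_j · J_j^{α,β}((x-L)/(x+L)). Then the trial function satisfies all three boundary conditions of the Eyring–Powell boundary layer problem: f(0) = 0, f'(0) = 1 (f has derivative 1 at x = 0), and the derivative f'(x) tends to 0 as x → +∞. -/

import Mathlib

open Filter

/-- The Jacobi polynomial `J_n^{α,β}` for real parameters `α, β`, defined by
`J_n^{α,β}(x) = (Γ(n+α+1)/(n!·Γ(n+α+β+1))) ·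
  ∑_{i=0}^{n} C(n,i) · (Γ(n+i+α+β+1)/Γ(i+α+1)) · ((x-1)/2)^i`,
where `Γ` is the real Gamma function and `C(n,i)` the binomial coefficient. -/
noncomputable def jacobiP (n : ℕ) (α β x : ℝ) : ℝ :=
  (Real.Gamma (n + α + 1) / (n.factorial * Real.Gamma (n + α + β + 1))) *
    ∑ i ∈ Finset.range (n + 1),
      (n.choose i : ℝ) * (Real.Gamma (n + i + α + β + 1) / Real.Gamma (i + α + 1)) *
        ((x - 1) / 2) ^ i

/-- Derivative of the Jacobi polynomial in its argument. -/
noncomputable def jacobiP' (n : ℕ) (α β x : ℝ) : ℝ :=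
  (Real.Gamma (n + α + 1) / (n.factorial * Real.Gamma (n + α + β + 1))) *
    ∑ i ∈ Finset.range (n + 1),
      (n.choose i : ℝ) * (Real.Gamma (n + i + α + β + 1) / Real.Gamma (i + α + 1)) *
        ((i : ℝ) * ((x - 1) / 2) ^ (i - 1) * (1 / 2))

lemma hasDerivAt_jacobiP (n : ℕ) (α β y : ℝ) :
    HasDerivAt (fun t => jacobiP n α β t) (jacobiP' n α β y) y := by
  unfold jacobiP jacobiP'
  refine HasDerivAt.const_mul _ (HasDerivAt.fun_sum fun i _ => ?_)
  exact ((((hasDerivAt_id y).sub_const 1).div_const 2).pow i).const_mul _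

lemma continuous_jacobiP' (n : ℕ) (α β : ℝ) : Continuous (fun t => jacobiP' n α β t) := by
  unfold jacobiP'
  fun_prop

/-- For real `α, β > -1`, `L > 0`, `N ∈ ℕ` and real coefficients
`a 0, …, a N`, the trial function
`f(x) = x/(x²+1) + (x²/(x²+1)) · ∑_{j=0}^{N} a j · J_j^{α,β}((x-L)/(x+L))`
satisfies the three boundary conditions of the Eyring–Powell boundary layer problem:
`f(0) = 0`, `f` has derivative `1` at `x = 0`, and `f'(x) → 0` as `x → +∞`. -/
theorem trial_function_boundary_conditions (α β L : ℝ) (hα : -1 < α) (hβ : -1 < β)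
    (hL : 0 < L) (N : ℕ) (a : ℕ → ℝ) :
    let f : ℝ → ℝ := fun x =>
      x / (x ^ 2 + 1) + (x ^ 2 / (x ^ 2 + 1)) *
        ∑ j ∈ Finset.range (N + 1), a j * jacobiP j α β ((x - L) / (x + L))
    f 0 = 0 ∧ HasDerivAt f 1 0 ∧ Tendsto (fun x => deriv f x) atTop (nhds 0) := by
  intro f
  set S : ℝ → ℝ := fun y => ∑ j ∈ Finset.range (N + 1), a j * jacobiP j α β y with hSdef
  set DS : ℝ → ℝ := fun y => ∑ j ∈ Finset.range (N + 1), a j * jacobiP' j α β y with hDSdef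
  have hS : ∀ y, HasDerivAt S (DS y) y := fun y =>
    HasDerivAt.fun_sum fun j _ => (hasDerivAt_jacobiP j α β y).const_mul (a j)
  have hDScont : Continuous DS := by
    exact continuous_finset_sum _ fun j _ => continuous_const.mul (continuous_jacobiP' j α β)
  -- squares positivity
  have hsq : ∀ x : ℝ, x ^ 2 + 1 ≠ 0 := fun x => by positivity
  -- general derivative formula
  have hder : ∀ x : ℝ, x + L ≠ 0 →
      HasDerivAt f
        ((1 * (x ^ 2 + 1) - x * (2 * x ^ 1)) / (x ^ 2 + 1) ^ 2 +
          (((2 * x ^ 1) * (x ^ 2 + 1) - x ^ 2 * (2 * x ^ 1)) / (x ^ 2 + 1) ^ 2 *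
              S ((x - L) / (x + L)) +
            x ^ 2 / (x ^ 2 + 1) *
              (DS ((x - L) / (x + L)) *
                ((1 * (x + L) - (x - L) * 1) / (x + L) ^ 2)))) x := by
    intro x hxL
    have h1 : HasDerivAt (fun x : ℝ => x / (x ^ 2 + 1))
        ((1 * (x ^ 2 + 1) - x * (2 * x ^ 1)) / (x ^ 2 + 1) ^ 2) x :=
      (hasDerivAt_id x).div ((hasDerivAt_pow 2 x).add_const 1) (hsq x)
    have h2 : HasDerivAt (fun x : ℝ => x ^ 2 / (x ^ 2 + 1))
        (((2 * x ^ 1) * (x ^ 2 + 1) - x ^ 2 * (2 * x ^ 1)) / (x ^ 2 + 1) ^ 2) x :=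
      (hasDerivAt_pow 2 x).div ((hasDerivAt_pow 2 x).add_const 1) (hsq x)
    have hu : HasDerivAt (fun x : ℝ => (x - L) / (x + L))
        ((1 * (x + L) - (x - L) * 1) / (x + L) ^ 2) x :=
      ((hasDerivAt_id x).sub_const L).div ((hasDerivAt_id x).add_const L) hxL
    have hSu : HasDerivAt (fun x : ℝ => S ((x - L) / (x + L)))
        (DS ((x - L) / (x + L)) * ((1 * (x + L) - (x - L) * 1) / (x + L) ^ 2)) x :=
      (hS _).comp x hu
    exact h1.add (h2.mul hSu)
  refine ⟨by norm_num [f], ?_, ?_⟩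
  · have := hder 0 (by simpa using hL.ne')
    convert this using 1
    norm_num
  · -- limit of the derivative at infinity
    have hLpos : ∀ᶠ x : ℝ in atTop, 0 < x := eventually_gt_atTop 0
    have hEq : (fun x => deriv f x) =ᶠ[atTop]
        fun x => (1 - x ^ 2) / ((x ^ 2 + 1) ^ 2) +
          ((2 * x) / ((x ^ 2 + 1) ^ 2) * S ((x - L) / (x + L)) +
            (2 * L * x ^ 2) / ((x ^ 2 + 1) * (x + L) ^ 2) * DS ((x - L) / (x + L))) := by
      filter_upwards [hLpos] with x hx
      have hxL : x + L ≠ 0 := by positivity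
      rw [(hder x hxL).deriv]
      have h2 : ((x : ℝ) + L) ^ 2 ≠ 0 := pow_ne_zero 2 hxL
      field_simp
      ring
    rw [Filter.tendsto_congr' hEq]
    -- limit of u
    have hupoly : Tendsto (fun x : ℝ => (2 * L) / (x + L)) atTop (nhds 0) := by
      have := Polynomial.div_tendsto_zero_of_degree_lt (Polynomial.C (2 * L))
        (Polynomial.X + Polynomial.C L) (by
          rw [Polynomial.degree_X_add_C]
          exact lt_of_le_of_lt (Polynomial.degree_C_le) (by norm_num))
      refine this.congr fun x => by simp
    have hu1 : Tendsto (fun x : ℝ => (x - L) / (x + L)) atTop (nhds 1) := by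
      have h := hupoly.const_sub 1
      rw [sub_zero] at h
      refine Tendsto.congr' ?_ h
      filter_upwards [hLpos] with x hx
      have hxL : x + L ≠ 0 := by positivity
      field_simp
      ring
    have hSu : Tendsto (fun x : ℝ => S ((x - L) / (x + L))) atTop (nhds (S 1)) :=
      ((hS 1).continuousAt.tendsto).comp hu1
    have hDSu : Tendsto (fun x : ℝ => DS ((x - L) / (x + L))) atTop (nhds (DS 1)) :=
      (hDScont.continuousAt.tendsto).comp hu1
    have t1 : Tendsto (fun x : ℝ => (1 - x ^ 2) / ((x ^ 2 + 1) ^ 2)) atTop (nhds 0) := by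
      have := Polynomial.div_tendsto_zero_of_degree_lt
        (1 - Polynomial.X ^ 2 : Polynomial ℝ) ((Polynomial.X ^ 2 + 1) ^ 2)
        (by
          have h1 : (1 - Polynomial.X ^ 2 : Polynomial ℝ).degree ≤ 2 := by compute_degree
          have h2 : (((Polynomial.X ^ 2 + 1) ^ 2 : Polynomial ℝ)).degree = 4 := by
            compute_degree!
          rw [h2]; exact lt_of_le_of_lt h1 (by norm_num))
      refine this.congr fun x => by simp
    have t2 : Tendsto (fun x : ℝ => (2 * x) / ((x ^ 2 + 1) ^ 2)) atTop (nhds 0) := by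
      have := Polynomial.div_tendsto_zero_of_degree_lt
        (Polynomial.C 2 * Polynomial.X : Polynomial ℝ) ((Polynomial.X ^ 2 + 1) ^ 2)
        (by
          have h1 : (Polynomial.C 2 * Polynomial.X : Polynomial ℝ).degree ≤ 1 := by
            compute_degree
          have h2 : (((Polynomial.X ^ 2 + 1) ^ 2 : Polynomial ℝ)).degree = 4 := by
            compute_degree!
          rw [h2]; exact lt_of_le_of_lt h1 (by norm_num))
      refine this.congr fun x => by simp
    have t3 : Tendsto (fun x : ℝ => (2 * L * x ^ 2) / ((x ^ 2 + 1) * (x + L) ^ 2))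
        atTop (nhds 0) := by
      have := Polynomial.div_tendsto_zero_of_degree_lt
        (Polynomial.C (2 * L) * Polynomial.X ^ 2 : Polynomial ℝ)
        ((Polynomial.X ^ 2 + 1) * (Polynomial.X + Polynomial.C L) ^ 2)
        (by
          have h1 : (Polynomial.C (2 * L) * Polynomial.X ^ 2 : Polynomial ℝ).degree ≤ 2 := by
            compute_degree
          have h2 : (((Polynomial.X ^ 2 + 1) * (Polynomial.X + Polynomial.C L) ^ 2 :
              Polynomial ℝ)).degree = 4 := by
            compute_degree!
          rw [h2]; exact lt_of_le_of_lt h1 (by norm_num))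
      refine this.congr fun x => by simp
    have := t1.add ((t2.mul hSu).add (t3.mul hDSu))
    simpa using this
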